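/- arXiv:2211.04922 — 2 statements merged into one kernel-verified Lean document; each statement's English description precedes it below -/
import Mathlib

section
/- Let D = (V, A) be a directed graph with s, t ∈ V, let 𝒫 be the set of simple s-t-paths viewed as subsets of V ∪ A, and let ρ, μ ∈ [0,1]^{V∪A} with ∑_{e∈P} ρ_e ≥ 1 − ∑_{e∈P} μ_e for all P ∈ 𝒫. Let d_v (resp. d_a) be the shortest-path distance from s to v (resp. to the tail of a, plus the cost of the tail) with respect to costs μ_e + ρ_e on nodes and arcs, counting the cost of all nodes and arcs strictly before the element; set α_e := min{d_e, 1 − ρ_e}. Then for τ uniform on [0,1], the random set S_τ := {e : α_e ≤ τ < α_e + ρ_e} satisfies Pr[e ∈ S_τ] = ρ_e for all e and Pr[S_τ ∩ P ≠ ∅] ≥ 1 − ∑_{e∈P} μ_e for all s-t-paths P. -/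
open Finset MeasureTheory

variable {V : Type*} [Fintype V] [DecidableEq V]

/-- `p` is a simple path from `s` to `v` in the digraph with arc set `Arcs`,
given as its sequence of nodes. -/
def IsPathOn (Arcs : Finset (V × V)) (s v : V) (p : List V) : Prop :=
  p.head? = some s ∧ p.getLast? = some v ∧ p.Nodup ∧
    p.Chain' (fun u w => (u, w) ∈ Arcs)

/-- The set of elements (nodes and arcs) of a path given by its node sequence. -/
def pathElems (p : List V) : Finset (V ⊕ V × V) :=
  p.toFinset.image Sum.inl ∪ (p.zip p.tail).toFinset.image Sum.inr

set_option linter.unusedSectionVars false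

lemma mem_pathElems_inl {l : List V} {x : V} : Sum.inl x ∈ pathElems l ↔ x ∈ l := by
  simp [pathElems]

lemma pathElems_singleton (v : V) : pathElems [v] = {Sum.inl v} := by
  simp [pathElems]

lemma pathElems_cons_cons (u w : V) (l : List V) :
    pathElems (u :: w :: l) =
      insert (Sum.inl u) (insert (Sum.inr (u, w)) (pathElems (w :: l))) := by
  ext e; simp [pathElems]; aesop

lemma exists_prefix_path (Arcs : Finset (V × V)) :
    ∀ (p : List V) (s u v : V), IsPathOn Arcs s u p → v ∈ p →
      ∃ q, IsPathOn Arcs s v q ∧ pathElems q ⊆ pathElems p := by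
  intro p
  induction p with
  | nil => intro s u v _ hv; simp at hv
  | cons x rest ih =>
    intro s u v h hv
    obtain ⟨h1, h2, h3, h4⟩ := h
    have hx : x = s := by simpa using h1
    subst hx
    rcases List.mem_cons.mp hv with rfl | hv'
    · refine ⟨[v], ⟨rfl, rfl, by simp, List.isChain_singleton _⟩, ?_⟩
      rw [pathElems_singleton]
      simp [mem_pathElems_inl]
    · obtain ⟨w, rest', rfl⟩ : ∃ w r, rest = w :: r := by
        cases rest with
        | nil => simp at hv'
        | cons a b => exact ⟨a, b, rfl⟩
      have hrest : IsPathOn Arcs w u (w :: rest') := by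
        refine ⟨rfl, h2, h3.of_cons, ?_⟩
        exact (List.chain_cons.mp h4).2
      obtain ⟨q, hq, hsub⟩ := ih w u v hrest hv'
      obtain ⟨y, q', rfl⟩ : ∃ y r, q = y :: r := by
        cases q with
        | nil => exact absurd hq.1 (by simp)
        | cons a b => exact ⟨a, b, rfl⟩
      have hy : y = w := by simpa using hq.1
      subst hy
      have hmemsub : ∀ z ∈ y :: q', z ∈ y :: rest' := by
        intro z hz
        exact mem_pathElems_inl.mp (hsub (mem_pathElems_inl.mpr hz))
      refine ⟨x :: y :: q', ⟨rfl, ?_, ?_, ?_⟩, ?_⟩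
      · rw [List.getLast?_cons_cons]; exact hq.2.1
      · refine List.nodup_cons.mpr ⟨fun hc => ?_, hq.2.2.1⟩
        exact (List.nodup_cons.mp h3).1 (hmemsub x hc)
      · exact List.chain_cons.mpr ⟨(List.chain_cons.mp h4).1, hq.2.2.2⟩
      · rw [pathElems_cons_cons, pathElems_cons_cons]
        exact Finset.insert_subset_insert _ (Finset.insert_subset_insert _ hsub)

lemma concat_path (Arcs : Finset (V × V)) :
    ∀ (p : List V) (s u v : V), IsPathOn Arcs s u p → (u, v) ∈ Arcs → v ∉ p →
      IsPathOn Arcs s v (p ++ [v]) ∧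
        pathElems (p ++ [v]) ⊆
          insert (Sum.inl v) (insert (Sum.inr (u, v)) (pathElems p)) := by
  intro p
  induction p with
  | nil => intro s u v h _ _; exact absurd h.1 (by simp)
  | cons x rest ih =>
    intro s u v h ha hv
    obtain ⟨h1, h2, h3, h4⟩ := h
    have hx : x = s := by simpa using h1
    subst hx
    cases rest with
    | nil =>
      have hu : x = u := by simpa using h2
      subst hu
      constructor
      · refine ⟨rfl, by simp, by simp; exact fun hc => hv (by simp [hc]), ?_⟩
        exact List.chain_cons.mpr ⟨ha, List.Chain.nil⟩
      · rw [show ([x] ++ [v] : List V) = x :: v :: [] by rfl, pathElems_cons_cons,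
          pathElems_singleton, pathElems_singleton]
        intro e he; simp at he ⊢; tauto
    | cons w rest' =>
      have hrest : IsPathOn Arcs w u (w :: rest') :=
        ⟨rfl, h2, h3.of_cons, (List.chain_cons.mp h4).2⟩
      have hvrest : v ∉ w :: rest' := fun hc => hv (List.mem_cons_of_mem _ hc)
      obtain ⟨hq, hsub⟩ := ih w u v hrest ha hvrest
      have hform : (x :: w :: rest') ++ [v] = x :: ((w :: rest') ++ [v]) := by simp
      have hform2 : (w :: rest') ++ [v] = w :: (rest' ++ [v]) := by simp
      constructor
      · refine ⟨by simp, ?_, ?_, ?_⟩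
        · rw [hform, hform2, List.getLast?_cons_cons]
          rw [hform2] at hq; exact hq.2.1
        · rw [hform]
          refine List.nodup_cons.mpr ⟨?_, hq.2.2.1⟩
          intro hc
          rcases List.mem_append.mp hc with hc1 | hc2
          · exact (List.nodup_cons.mp h3).1 hc1
          · exact hv (by simp at hc2; simp [hc2])
        · rw [hform, hform2]
          refine List.chain_cons.mpr ⟨(List.chain_cons.mp h4).1, ?_⟩
          rw [hform2] at hq
          exact hq.2.2.2
      · rw [hform, hform2, pathElems_cons_cons, ← hform2, pathElems_cons_cons]
        intro e he
        simp only [Finset.mem_insert] at he ⊢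
        rcases he with rfl | rfl | he
        · tauto
        · tauto
        · have := hsub he
          simp only [Finset.mem_insert] at this
          tauto

/-- The level set `S_τ = {e : α_e ≤ τ < α_e + ρ_e}`. -/
noncomputable def levelSet (α ρ : V ⊕ V × V → ℝ) (τ : ℝ) : Finset (V ⊕ V × V) :=
  Finset.univ.filter (fun e => α e ≤ τ ∧ τ < α e + ρ e)

/-- Digraph specialization of the decomposition theorem: with `α` the truncation at
`1 - ρ` of the shortest-path distances (w.r.t. node and arc costs `μ + ρ`, counting
all elements strictly before the element), the random set
`S_τ = {e : α_e ≤ τ < α_e + ρ_e}` for `τ` uniform on `[0,1)` has marginals `ρ` and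
hits every `s`-`t`-path `P` with probability at least `1 − ∑_{e∈P} μ_e`. -/
theorem digraph_feasible_decomposition
    (Arcs : Finset (V × V)) (s t : V)
    (ρ μ : V ⊕ V × V → ℝ)
    (hρ : ∀ e, 0 ≤ ρ e ∧ ρ e ≤ 1) (hμ : ∀ e, 0 ≤ μ e ∧ μ e ≤ 1)
    (hcond : ∀ p : List V, IsPathOn Arcs s t p →
      1 - ∑ e ∈ pathElems p, μ e ≤ ∑ e ∈ pathElems p, ρ e)
    (α : V ⊕ V × V → ℝ)
    -- `α_e = min {d_e, 1 - ρ_e}`, where `d` is the shortest-path distance to `e`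
    -- w.r.t. costs `μ + ρ`, counting all nodes and arcs strictly before `e`:
    (hα₁ : ∀ e, α e ≤ 1 - ρ e)
    (hα₂ : ∀ v : V, ∀ p : List V, IsPathOn Arcs s v p →
      α (Sum.inl v) ≤ ∑ f ∈ pathElems p \ {Sum.inl v}, (μ f + ρ f))
    (hα₃ : ∀ a ∈ Arcs, ∀ p : List V, IsPathOn Arcs s a.1 p →
      α (Sum.inr a) ≤ ∑ f ∈ pathElems p, (μ f + ρ f))
    (hα₄ : ∀ e : V ⊕ V × V, α e = 1 - ρ e ∨
      (∃ v : V, e = Sum.inl v ∧ ∃ p : List V, IsPathOn Arcs s v p ∧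
        α e = ∑ f ∈ pathElems p \ {Sum.inl v}, (μ f + ρ f)) ∨
      (∃ a ∈ Arcs, e = Sum.inr a ∧ ∃ p : List V, IsPathOn Arcs s a.1 p ∧
        α e = ∑ f ∈ pathElems p, (μ f + ρ f))) :
    (∀ e, (volume {τ ∈ Set.Ico (0:ℝ) 1 | e ∈ levelSet α ρ τ}).toReal = ρ e) ∧
    (∀ p : List V, IsPathOn Arcs s t p →
      1 - ∑ e ∈ pathElems p, μ e ≤
        (volume {τ ∈ Set.Ico (0:ℝ) 1 |
          ((levelSet α ρ τ) ∩ pathElems p).Nonempty}).toReal) := by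
  have hc : ∀ e, 0 ≤ μ e + ρ e := fun e => add_nonneg (hμ e).1 (hρ e).1
  -- nonnegativity of α
  have hα0 : ∀ e, 0 ≤ α e := by
    intro e
    rcases hα₄ e with h | ⟨v, _, p, _, h⟩ | ⟨a, _, _, p, _, h⟩ <;> rw [h]
    · linarith [(hρ e).2]
    · exact Finset.sum_nonneg fun f _ => hc f
    · exact Finset.sum_nonneg fun f _ => hc f
  -- α at the source is ≤ 0
  have hαs : α (Sum.inl s) ≤ 0 := by
    have h := hα₂ s [s] ⟨rfl, rfl, by simp, List.isChain_singleton _⟩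
    rw [pathElems_singleton] at h
    simpa using h
  -- helper: sum over insert
  have hins : ∀ (x : V ⊕ V × V) (S : Finset (V ⊕ V × V)),
      ∑ f ∈ insert x S, (μ f + ρ f) ≤ (μ x + ρ x) + ∑ f ∈ S, (μ f + ρ f) := by
    intro x S
    by_cases hx : x ∈ S
    · rw [Finset.insert_eq_self.mpr hx]
      linarith [hc x]
    · rw [Finset.sum_insert hx]
  -- step from a node to an outgoing arc
  have hL2 : ∀ a ∈ Arcs, α (Sum.inl a.1) = 1 - ρ (Sum.inl a.1) ∨
      α (Sum.inr a) ≤ α (Sum.inl a.1) + (μ (Sum.inl a.1) + ρ (Sum.inl a.1)) := by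
    intro a ha
    rcases hα₄ (Sum.inl a.1) with h | ⟨v, hv, p, hp, h⟩ | ⟨b, _, heq, _⟩
    · exact Or.inl h
    · right
      have hv' : a.1 = v := by injection hv
      subst hv'
      have hmem : Sum.inl a.1 ∈ pathElems p :=
        mem_pathElems_inl.mpr (List.mem_of_mem_getLast? hp.2.1)
      calc α (Sum.inr a) ≤ ∑ f ∈ pathElems p, (μ f + ρ f) := hα₃ a ha p hp
        _ = ∑ f ∈ pathElems p \ {Sum.inl a.1}, (μ f + ρ f) + (μ (Sum.inl a.1) + ρ (Sum.inl a.1)) :=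
            Finset.sum_eq_sum_sdiff_singleton_add hmem _
        _ = α (Sum.inl a.1) + (μ (Sum.inl a.1) + ρ (Sum.inl a.1)) := by rw [h]
    · exact absurd heq (by simp)
  -- step from an arc to its head
  have hL3 : ∀ a ∈ Arcs, α (Sum.inr a) = 1 - ρ (Sum.inr a) ∨
      α (Sum.inl a.2) ≤ α (Sum.inr a) + (μ (Sum.inr a) + ρ (Sum.inr a)) := by
    intro a ha
    rcases hα₄ (Sum.inr a) with h | ⟨v, heq, _⟩ | ⟨b, hb, heq, p, hp, h⟩
    · exact Or.inl h
    · exact absurd heq (by simp)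
    · right
      have hb' : a = b := by injection heq
      subst hb'
      by_cases hvp : a.2 ∈ p
      · obtain ⟨q, hq, hsub⟩ := exists_prefix_path Arcs p s a.1 a.2 hp hvp
        have h2 := hα₂ a.2 q hq
        have h3 : ∑ f ∈ pathElems q \ {Sum.inl a.2}, (μ f + ρ f) ≤
            ∑ f ∈ pathElems p, (μ f + ρ f) :=
          Finset.sum_le_sum_of_subset_of_nonneg
            (le_trans (Finset.sdiff_subset) hsub) (fun f _ _ => hc f)
        have h4 : (0:ℝ) ≤ μ (Sum.inr a) + ρ (Sum.inr a) := hc _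
        linarith [h2, h3, h.ge, h.le]
      · have hpa : (a.1, a.2) ∈ Arcs := by rwa [Prod.mk.eta]
        obtain ⟨hq, hsub⟩ := concat_path Arcs p s a.1 a.2 hp hpa hvp
        have h2 := hα₂ a.2 (p ++ [a.2]) hq
        have hsub2 : pathElems (p ++ [a.2]) \ {Sum.inl a.2} ⊆
            insert (Sum.inr a) (pathElems p) := by
          intro e he
          rw [Finset.mem_sdiff] at he
          have := hsub he.1
          simp only [Finset.mem_insert, Prod.mk.eta] at this ⊢
          rcases this with rfl | h' | h'
          · exact absurd (Finset.mem_singleton_self _) he.2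
          · exact Or.inl h'
          · exact Or.inr h'
        have h3 : ∑ f ∈ pathElems (p ++ [a.2]) \ {Sum.inl a.2}, (μ f + ρ f) ≤
            ∑ f ∈ insert (Sum.inr a) (pathElems p), (μ f + ρ f) :=
          Finset.sum_le_sum_of_subset_of_nonneg hsub2 (fun f _ _ => hc f)
        have h4 := hins (Sum.inr a) (pathElems p)
        linarith [h2, h3, h4, h.ge, h.le]
  -- α at the sink is large
  have hαt : (1:ℝ) ≤ α (Sum.inl t) + (μ (Sum.inl t) + ρ (Sum.inl t)) := by
    rcases hα₄ (Sum.inl t) with h | ⟨v, hv, p, hp, h⟩ | ⟨b, _, heq, _⟩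
    · rw [h]; linarith [(hμ (Sum.inl t)).1]
    · have hv' : t = v := by injection hv
      subst hv'
      have hmem : Sum.inl t ∈ pathElems p :=
        mem_pathElems_inl.mpr (List.mem_of_mem_getLast? hp.2.1)
      have hsum : ∑ f ∈ pathElems p, (μ f + ρ f) =
          ∑ f ∈ pathElems p \ {Sum.inl t}, (μ f + ρ f) + (μ (Sum.inl t) + ρ (Sum.inl t)) :=
        Finset.sum_eq_sum_sdiff_singleton_add hmem _
      have hco := hcond p hp
      have hsplit : ∑ f ∈ pathElems p, (μ f + ρ f) =
          ∑ f ∈ pathElems p, μ f + ∑ f ∈ pathElems p, ρ f := Finset.sum_add_distrib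
      rw [h]
      linarith
    · exact absurd heq (by simp)
  -- walking along a chain
  have walk : ∀ τ : ℝ, τ < 1 → ∀ (l : List V) (u : V),
      List.Chain (fun x y => (x, y) ∈ Arcs) u l → α (Sum.inl u) ≤ τ →
      (∃ e ∈ pathElems (u :: l), α e ≤ τ ∧ τ < α e + ρ e + μ e) ∨
        (∃ z, (u :: l).getLast? = some z ∧ α (Sum.inl z) ≤ τ) := by
    intro τ hτ l
    induction l with
    | nil => intro u _ hu; exact Or.inr ⟨u, rfl, hu⟩
    | cons w l' ih =>
      intro u hch hu
      obtain ⟨huw, hch'⟩ := List.chain_cons.mp hch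
      have hmu : Sum.inl u ∈ pathElems (u :: w :: l') :=
        mem_pathElems_inl.mpr List.mem_cons_self
      have hma : Sum.inr (u, w) ∈ pathElems (u :: w :: l') := by
        rw [pathElems_cons_cons]; simp
      rcases hL2 (u, w) huw with htr | hle
    -- note: (u,w).1 = u definitionally
      · refine Or.inl ⟨Sum.inl u, hmu, hu, ?_⟩
        have := (hμ (Sum.inl u)).1
        rw [htr] at hu ⊢
        linarith
      · by_cases hcase : α (Sum.inr (u, w)) ≤ τ
        · rcases hL3 (u, w) huw with htr2 | hle2
          · refine Or.inl ⟨Sum.inr (u, w), hma, hcase, ?_⟩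
            have := (hμ (Sum.inr (u, w))).1
            rw [htr2] at hcase ⊢
            linarith
          · by_cases hcase2 : α (Sum.inl w) ≤ τ
            · rcases ih w hch' hcase2 with ⟨e, he, h1, h2⟩ | ⟨z, hz, h1⟩
              · refine Or.inl ⟨e, ?_, h1, h2⟩
                rw [pathElems_cons_cons]
                exact Finset.mem_insert_of_mem (Finset.mem_insert_of_mem he)
              · exact Or.inr ⟨z, by rw [List.getLast?_cons_cons]; exact hz, h1⟩
            · push_neg at hcase2
              refine Or.inl ⟨Sum.inr (u, w), hma, hcase, ?_⟩
              linarith [hle2]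
        · push_neg at hcase
          refine Or.inl ⟨Sum.inl u, hmu, hu, ?_⟩
          linarith [hle]
  -- covering of [0,1)
  have cover : ∀ p : List V, IsPathOn Arcs s t p → ∀ τ : ℝ, 0 ≤ τ → τ < 1 →
      ∃ e ∈ pathElems p, α e ≤ τ ∧ τ < α e + ρ e + μ e := by
    intro p hp τ h0 h1
    obtain ⟨x, l, rfl⟩ : ∃ x r, p = x :: r := by
      cases p with
      | nil => exact absurd hp.1 (by simp)
      | cons a b => exact ⟨a, b, rfl⟩
    have hx : x = s := by simpa using hp.1
    have hch : List.Chain (fun a b => (a, b) ∈ Arcs) x l := hp.2.2.2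
    have hαx : α (Sum.inl x) ≤ τ := by rw [hx]; exact le_trans hαs h0
    rcases walk τ h1 l x hch hαx with ⟨e, he, hh⟩ | ⟨z, hz, h1'⟩
    · exact ⟨e, he, hh⟩
    · have hzt : z = t := by
        have h := hp.2.1
        rw [hz] at h
        injection h
      rw [hzt] at h1'
      have hmt : Sum.inl t ∈ pathElems (x :: l) :=
        mem_pathElems_inl.mpr (List.mem_of_mem_getLast? hp.2.1)
      exact ⟨Sum.inl t, hmt, h1', by linarith [hαt]⟩
  constructor
  · -- marginals
    intro e
    have h0 := hα0 e
    have h1 : α e + ρ e ≤ 1 := by linarith [hα₁ e]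
    have hset : {τ ∈ Set.Ico (0:ℝ) 1 | e ∈ levelSet α ρ τ} = Set.Ico (α e) (α e + ρ e) := by
      ext τ
      simp only [Set.mem_setOf_eq, Set.mem_Ico, levelSet, Finset.mem_filter,
        Finset.mem_univ, true_and]
      constructor
      · rintro ⟨_, h⟩; exact h
      · rintro ⟨ha, hb⟩
        exact ⟨⟨le_trans h0 ha, lt_of_lt_of_le hb h1⟩, ha, hb⟩
    rw [hset, Real.volume_Ico]
    rw [show α e + ρ e - α e = ρ e by ring, ENNReal.toReal_ofReal (hρ e).1]
  · -- hitting probability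
    intro p hp
    set H : Set ℝ := {τ ∈ Set.Ico (0:ℝ) 1 | ((levelSet α ρ τ) ∩ pathElems p).Nonempty} with hHdef
    set G : Set ℝ := ⋃ e ∈ pathElems p, Set.Ico (α e + ρ e) (α e + ρ e + μ e) with hGdef
    have hH : H = ⋃ e ∈ pathElems p, Set.Ico (α e) (α e + ρ e) := by
      ext τ
      simp only [hHdef, Set.mem_setOf_eq, Set.mem_Ico, Set.mem_iUnion, exists_prop,
        Finset.Nonempty, Finset.mem_inter, levelSet, Finset.mem_filter, Finset.mem_univ,
        true_and]
      constructor
      · rintro ⟨_, e, ⟨h1, h2⟩, h3⟩; exact ⟨e, h3, h1, h2⟩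
      · rintro ⟨e, h3, h1, h2⟩
        refine ⟨⟨le_trans (hα0 e) h1, lt_of_lt_of_le h2 (by linarith [hα₁ e])⟩, e, ⟨h1, h2⟩, h3⟩
    have hHsub : H ⊆ Set.Ico (0:ℝ) 1 := fun τ hτ => hτ.1
    have hcov : Set.Ico (0:ℝ) 1 ⊆ H ∪ G := by
      rintro τ ⟨ht0, ht1⟩
      obtain ⟨e, he, hle, hlt⟩ := cover p hp τ ht0 ht1
      by_cases hcs : τ < α e + ρ e
      · left; rw [hH]; exact Set.mem_biUnion he ⟨hle, hcs⟩
      · right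
        push_neg at hcs
        exact Set.mem_biUnion he ⟨hcs, by linarith⟩
    have hGvol : volume G ≤ ENNReal.ofReal (∑ e ∈ pathElems p, μ e) := by
      calc volume G ≤ ∑ e ∈ pathElems p, volume (Set.Ico (α e + ρ e) (α e + ρ e + μ e)) :=
            measure_biUnion_finset_le _ _
        _ = ∑ e ∈ pathElems p, ENNReal.ofReal (μ e) := by
            refine Finset.sum_congr rfl fun e _ => ?_
            rw [Real.volume_Ico, show α e + ρ e + μ e - (α e + ρ e) = μ e by ring]
        _ = ENNReal.ofReal (∑ e ∈ pathElems p, μ e) :=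
            (ENNReal.ofReal_sum_of_nonneg fun e _ => (hμ e).1).symm
    have hHfin : volume H ≠ ⊤ := by
      have : volume H ≤ volume (Set.Ico (0:ℝ) 1) := measure_mono hHsub
      rw [Real.volume_Ico] at this
      exact ne_top_of_le_ne_top (by simp) this
    have hGfin : volume G ≠ ⊤ := ne_top_of_le_ne_top ENNReal.ofReal_ne_top hGvol
    have hone : (1 : ENNReal) ≤ volume H + volume G := by
      have h1 : volume (Set.Ico (0:ℝ) 1) ≤ volume (H ∪ G) := measure_mono hcov
      have h2 : volume (H ∪ G) ≤ volume H + volume G := measure_union_le _ _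
      rw [Real.volume_Ico] at h1
      simpa using le_trans h1 h2
    have hGr : (volume G).toReal ≤ ∑ e ∈ pathElems p, μ e :=
      ENNReal.toReal_le_of_le_ofReal (Finset.sum_nonneg fun e _ => (hμ e).1) hGvol
    have hfinal : (1:ℝ) ≤ (volume H).toReal + (volume G).toReal := by
      have := ENNReal.toReal_mono (by
        rw [ENNReal.add_ne_top]; exact ⟨hHfin, hGfin⟩) hone
      rwa [ENNReal.toReal_one, ENNReal.toReal_add hHfin hGfin] at this
    linarith
end

section
/- Let (E, 𝒫) be a set system with the weak MFMC property, μ ∈ [0,1]^E, π_P := 1 − ∑_{e∈P} μ_e, and ρ ∈ [0,1]^E with ∑_{e∈P}(ρ_e + μ_e) ≥ 1 for all P ∈ 𝒫. Write y := ρ + μ as y = ∑_{S∈𝒮} λ_S 1_S + r, where 𝒮 is the family of covers of 𝒫, λ ≥ 0 with ∑_S λ_S = 1, and r ∈ ℝ_+^E. Let T_1 be the random cover with Pr[T_1 = S] = λ_S, and independently let T_2 := {e : y_e > r_e, τ < ρ_e/(y_e − r_e)} for τ uniform on [0,1]. Then T := T_1 ∩ T_2 satisfies Pr[e ∈ T]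 = min{ρ_e, y_e − r_e} ≤ ρ_e for all e ∈ E, and Pr[T ∩ P ≠ ∅] ≥ π_P for all P ∈ 𝒫. -/
open Finset MeasureTheory

variable {E : Type*} [Fintype E] [DecidableEq E]

/-- The covering polyhedron `Y_𝒫 = {y ∈ ℝ₊^E : ∑_{e ∈ P} y_e ≥ 1 ∀ P ∈ 𝒫}`. -/
def coverPolyhedron (Ps : Finset (Finset E)) : Set (E → ℝ) :=
  {y | (∀ e, 0 ≤ y e) ∧ ∀ P ∈ Ps, 1 ≤ ∑ e ∈ P, y e}

/-- The threshold set `T₂(τ) = {e : y_e > r_e, τ < ρ_e/(y_e − r_e)}`. -/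
noncomputable def thresholdSet (y r ρ : E → ℝ) (τ : ℝ) : Finset E :=
  Finset.univ.filter (fun e => r e < y e ∧ τ < ρ e / (y e - r e))

/-- Given a decomposition `y = ρ + μ = ∑_S λ_S 1_S + r` of `y ∈ Y_𝒫` into a convex
combination of incidence vectors of covers `S` plus a nonnegative vector `r`
(guaranteed to exist by the weak MFMC property), the random set `T = T₁ ∩ T₂`, where
`T₁` is the random cover with `Pr[T₁ = S] = λ_S` and independently
`T₂ = {e : y_e > r_e, τ < ρ_e/(y_e − r_e)}` for `τ` uniform on `[0,1)`, satisfies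
`Pr[e ∈ T] = min{ρ_e, y_e − r_e} ≤ ρ_e` and `Pr[T ∩ P ≠ ∅] ≥ π_P = 1 − ∑_{e∈P} μ_e`. -/
theorem mfmc_intersection_construction
    (Ps : Finset (Finset E))
    (hMFMC : ∀ w ∈ Set.extremePoints ℝ (coverPolyhedron Ps), ∀ e, ∃ n : ℤ, w e = n)
    (μ : E → ℝ) (hμ : ∀ e, 0 ≤ μ e ∧ μ e ≤ 1)
    (π : Finset E → ℝ) (hπ : ∀ P ∈ Ps, π P = 1 - ∑ e ∈ P, μ e)
    (ρ : E → ℝ) (hρ : ∀ e, 0 ≤ ρ e ∧ ρ e ≤ 1)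
    (hcond : ∀ P ∈ Ps, 1 ≤ ∑ e ∈ P, (ρ e + μ e))
    (y : E → ℝ) (hy : ∀ e, y e = ρ e + μ e)
    (lam : Finset E → ℝ) (r : E → ℝ)
    (hlam0 : ∀ S, 0 ≤ lam S) (hlam1 : ∑ S : Finset E, lam S = 1)
    (hsupp : ∀ S : Finset E, lam S ≠ 0 → ∀ P ∈ Ps, (S ∩ P).Nonempty)
    (hr : ∀ e, 0 ≤ r e)
    (hdecomp : ∀ e : E,
      y e = (∑ S ∈ Finset.univ.filter (fun S : Finset E => e ∈ S), lam S) + r e) :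
    (∀ e : E,
      (∑ S ∈ Finset.univ.filter (fun S : Finset E => e ∈ S), lam S) *
          (volume {τ ∈ Set.Ico (0:ℝ) 1 | e ∈ thresholdSet y r ρ τ}).toReal =
        min (ρ e) (y e - r e) ∧ min (ρ e) (y e - r e) ≤ ρ e) ∧
    (∀ P ∈ Ps, π P ≤
      ∑ S : Finset E, lam S *
        (volume {τ ∈ Set.Ico (0:ℝ) 1 |
          ((S ∩ thresholdSet y r ρ τ) ∩ P).Nonempty}).toReal) := by
  classical
  set L : E → ℝ := fun e => ∑ S ∈ Finset.univ.filter (fun S : Finset E => e ∈ S), lam S with hLdef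
  have hL0 : ∀ e, 0 ≤ L e := fun e => Finset.sum_nonneg fun S _ => hlam0 S
  have hLeq : ∀ e, L e = y e - r e := fun e => by have := hdecomp e; simp [hLdef]; linarith
  set v : E → ℝ := fun e => (volume {τ ∈ Set.Ico (0:ℝ) 1 | e ∈ thresholdSet y r ρ τ}).toReal with hvdef
  have hsub : ∀ e, {τ ∈ Set.Ico (0:ℝ) 1 | e ∈ thresholdSet y r ρ τ} ⊆ Set.Ico (0:ℝ) 1 :=
    fun e τ hτ => hτ.1
  have hIco : volume (Set.Ico (0:ℝ) 1) = 1 := by simp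
  have part1 : ∀ e, L e * v e = min (ρ e) (y e - r e) := by
    intro e
    by_cases hlt : r e < y e
    · have hz : 0 < y e - r e := by linarith
      have hseq : {τ ∈ Set.Ico (0:ℝ) 1 | e ∈ thresholdSet y r ρ τ}
          = Set.Ico (0:ℝ) (min (ρ e / (y e - r e)) 1) := by
        ext τ
        simp only [Set.mem_setOf_eq, Set.mem_Ico, thresholdSet, Finset.mem_filter,
          Finset.mem_univ, true_and, lt_min_iff, hlt]
        tauto
      have ht0 : 0 ≤ min (ρ e / (y e - r e)) 1 := by
        exact le_min (div_nonneg (hρ e).1 hz.le) zero_le_one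
      have hvol : v e = min (ρ e / (y e - r e)) 1 := by
        rw [hvdef]; simp only; rw [hseq, Real.volume_Ico, ENNReal.toReal_ofReal (by linarith)]
        ring
      rw [hvol, hLeq e, mul_min_of_nonneg _ _ hz.le, mul_one,
        mul_div_cancel₀ _ (ne_of_gt hz)]
    · have hz : y e - r e = 0 := by
        have := hLeq e; have := hL0 e; push_neg at hlt; linarith
      rw [hLeq e, hz]
      simp [min_eq_right (hρ e).1]
  refine ⟨fun e => ⟨part1 e, min_le_left _ _⟩, fun P hP => ?_⟩
  set w : Finset E → ℝ := fun S => (volume {τ ∈ Set.Ico (0:ℝ) 1 |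
      ((S ∩ thresholdSet y r ρ τ) ∩ P).Nonempty}).toReal with hwdef
  have hv1 : ∀ e, v e ≤ 1 := by
    intro e
    have hm : volume {τ ∈ Set.Ico (0:ℝ) 1 | e ∈ thresholdSet y r ρ τ} ≤ volume (Set.Ico (0:ℝ) 1) :=
      measure_mono (hsub e)
    have h := ENNReal.toReal_mono (by rw [hIco]; exact ENNReal.one_ne_top) hm
    rw [hIco, ENNReal.toReal_one] at h; exact h
  have hwge : ∀ S, ∀ e ∈ S ∩ P, v e ≤ w S := by
    intro S e he
    have hss : {τ ∈ Set.Ico (0:ℝ) 1 | e ∈ thresholdSet y r ρ τ} ⊆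
        {τ ∈ Set.Ico (0:ℝ) 1 | ((S ∩ thresholdSet y r ρ τ) ∩ P).Nonempty} := by
      intro τ hτ
      exact ⟨hτ.1, ⟨e, by simp [Finset.mem_inter, hτ.2, (Finset.mem_inter.1 he).1,
        (Finset.mem_inter.1 he).2]⟩⟩
    have hfin : volume {τ ∈ Set.Ico (0:ℝ) 1 |
        ((S ∩ thresholdSet y r ρ τ) ∩ P).Nonempty} ≠ ⊤ := by
      have : volume {τ ∈ Set.Ico (0:ℝ) 1 | ((S ∩ thresholdSet y r ρ τ) ∩ P).Nonempty}
          ≤ volume (Set.Ico (0:ℝ) 1) := measure_mono fun τ hτ => hτ.1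
      rw [hIco] at this
      exact ne_top_of_le_ne_top ENNReal.one_ne_top this
    exact ENNReal.toReal_mono hfin (measure_mono hss)
  have step1 : ∀ S : Finset E, lam S * (1 - w S) ≤ ∑ e ∈ S ∩ P, lam S * (1 - v e) := by
    intro S
    by_cases hS : lam S = 0
    · rw [hS]; simp
    · obtain ⟨e, he⟩ := hsupp S hS P hP
      calc lam S * (1 - w S) ≤ lam S * (1 - v e) := by
            have := hwge S e he
            nlinarith [hlam0 S]
        _ ≤ ∑ e ∈ S ∩ P, lam S * (1 - v e) := by
            refine Finset.single_le_sum (f := fun i => lam S * (1 - v i)) (fun i hi => ?_) he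
            show 0 ≤ lam S * (1 - v i)
            have := hv1 i; nlinarith [hlam0 S]
  have step2 : ∑ S : Finset E, ∑ e ∈ S ∩ P, lam S * (1 - v e)
      = ∑ e ∈ P, (1 - v e) * L e := by
    have h1 : ∀ S : Finset E, ∑ e ∈ S ∩ P, lam S * (1 - v e)
        = ∑ e ∈ P, if e ∈ S then lam S * (1 - v e) else 0 := by
      intro S
      rw [Finset.inter_comm, ← Finset.filter_mem_eq_inter, Finset.sum_filter]
    simp only [h1]
    rw [Finset.sum_comm]
    refine Finset.sum_congr rfl fun e _ => ?_
    rw [hLdef]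
    simp only
    rw [Finset.sum_filter, Finset.mul_sum]
    refine Finset.sum_congr rfl fun S _ => ?_
    split <;> ring
  have step3 : ∀ e ∈ P, (1 - v e) * L e ≤ μ e := by
    intro e _
    have h := part1 e
    have : (1 - v e) * L e = L e - min (ρ e) (y e - r e) := by rw [← h]; ring
    rw [this, hLeq e]
    rcases min_cases (ρ e) (y e - r e) with ⟨hm, _⟩ | ⟨hm, _⟩
    · rw [hm]; have := hy e; have := hr e; linarith
    · rw [hm]; linarith [(hμ e).1]
  have key : ∑ S : Finset E, lam S * (1 - w S) ≤ ∑ e ∈ P, μ e :=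
    le_trans (le_trans (Finset.sum_le_sum fun S _ => step1 S) step2.le)
      (Finset.sum_le_sum step3)
  have hexp : ∑ S : Finset E, lam S * (1 - w S) = 1 - ∑ S : Finset E, lam S * w S := by
    simp only [mul_sub, mul_one]
    rw [Finset.sum_sub_distrib, hlam1]
  rw [hπ P hP]
  rw [hexp] at key
  linarith
end
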